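/- In a median graph the median operation is 1-Lipschitz in each variable: for all vertices x, y, a, b one has dist(m(x, y, a), m(x, y, b)) ≤ dist(a, b). -/

import Mathlib

/-- `m` is a median function for the graph `G`: `G` is connected and for all
`x y z` the vertex `m x y z` is the unique vertex lying (metrically) between
each pair among `x, y, z`. -/
def IsMedianFn {V : Type*} (G : SimpleGraph V) (m : V → V → V → V) : Prop :=
  G.Connected ∧ ∀ x y z : V,
    (G.dist x (m x y z) + G.dist (m x y z) y = G.dist x y ∧
     G.dist y (m x y z) + G.dist (m x y z) z = G.dist y z ∧
     G.dist x (m x y z) + G.dist (m x y z) z = G.dist x z) ∧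
    ∀ w : V,
      (G.dist x w + G.dist w y = G.dist x y ∧
       G.dist y w + G.dist w z = G.dist y z ∧
       G.dist x w + G.dist w z = G.dist x z) → w = m x y z

/-- `Y` is a median subalgebra: it is closed under the median operation. -/
def IsSubalgebra {V : Type*} (m : V → V → V → V) (Y : Set V) : Prop :=
  ∀ x ∈ Y, ∀ y ∈ Y, ∀ z ∈ Y, m x y z ∈ Y

/-- `A` is `C`-connected: any two points of `A` are joined by a finite sequence
of points of `A` with consecutive points at graph distance at most `C`. -/
def CConnected {V : Type*} (G : SimpleGraph V) (C : ℕ) (A : Set V) : Prop :=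
  ∀ x ∈ A, ∀ y ∈ A, ∃ (n : ℕ) (p : ℕ → V), p 0 = x ∧ p n = y ∧
    (∀ i ≤ n, p i ∈ A) ∧ ∀ i < n, G.dist (p i) (p (i + 1)) ≤ C

/-- The `r`-neighbourhood of `A` in the graph metric. -/
def Nbhd {V : Type*} (G : SimpleGraph V) (A : Set V) (r : ℕ) : Set V :=
  {v | ∃ a ∈ A, G.dist v a ≤ r}

/-- `G` has cube dimension at most `R`: any isometrically embedded
`n`-dimensional Hamming cube has `n ≤ R`. -/
def CubeDimLE {V : Type*} (G : SimpleGraph V) (R : ℕ) : Prop :=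
  ∀ (n : ℕ) (f : (Fin n → Bool) → V),
    (∀ a b, G.dist (f a) (f b) = hammingDist a b) → n ≤ R

/-- The median subalgebra generated by `A`. -/
def MedianSpan {V : Type*} (m : V → V → V → V) (A : Set V) : Set V :=
  ⋂₀ {Y : Set V | A ⊆ Y ∧ IsSubalgebra m Y}

/-- `Z` is (metrically) convex in `G`: every vertex on a geodesic between two
points of `Z` belongs to `Z`. -/
def GraphConvex {V : Type*} (G : SimpleGraph V) (Z : Set V) : Prop :=
  ∀ x ∈ Z, ∀ y ∈ Z, ∀ w : V, G.dist x w + G.dist w y = G.dist x y → w ∈ Z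

/-- The convex hull of `A`: the intersection of all convex sets containing `A`. -/
def ConvexHullG {V : Type*} (G : SimpleGraph V) (A : Set V) : Set V :=
  ⋂₀ {Z : Set V | GraphConvex G Z ∧ A ⊆ Z}

section Aux
variable {V : Type*} {G : SimpleGraph V} {m : V → V → V → V}

private lemma sign_lemma (hm : IsMedianFn G m) {u u' : V} (h : G.Adj u u') (c : V) :
    G.dist u' c = G.dist u c + 1 ∨ G.dist u c = G.dist u' c + 1 := by
  obtain ⟨hc, hmed⟩ := hm
  obtain ⟨⟨h1, h2, h3⟩, _⟩ := hmed u u' c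
  have huu' : G.dist u u' = 1 := SimpleGraph.dist_eq_one_iff_adj.mpr h
  rw [huu'] at h1
  rcases (by omega : G.dist u (m u u' c) = 0 ∨ G.dist (m u u' c) u' = 0) with h0 | h0
  · have hw : u = m u u' c := hc.dist_eq_zero_iff.mp h0
    rw [← hw] at h2
    have hcm : G.dist u' u = G.dist u u' := SimpleGraph.dist_comm
    left; omega
  · have hw : m u u' c = u' := hc.dist_eq_zero_iff.mp h0
    rw [hw] at h3
    right; omega

private lemma no_bad (hm : IsMedianFn G m) :
    ∀ n (x y u u' v : V), G.Adj u u' →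
      G.dist x u + G.dist u y = G.dist x y →
      G.dist x v + G.dist v y = G.dist x y →
      G.dist u v = G.dist u' v + 1 →
      G.dist u' v = n →
      G.dist x u' = G.dist x u + 1 →
      G.dist y u' = G.dist y u + 1 → False := by
  intro n
  induction n using Nat.strong_induction_on with
  | _ n ih =>
  intro x y u u' v hadj hu hv huv hn hxu' hyu'
  have hc := hm.1
  have hmed := hm.2
  rcases Nat.eq_zero_or_pos n with h0 | hpos
  · subst h0
    have he : u' = v := hc.dist_eq_zero_iff.mp hn
    subst he
    have c1 : G.dist u' y = G.dist y u' := SimpleGraph.dist_comm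
    have c2 : G.dist u y = G.dist y u := SimpleGraph.dist_comm
    omega
  · have key : ∀ x' y' : V,
        G.dist x' u + G.dist u y' = G.dist x' y' →
        G.dist x' v + G.dist v y' = G.dist x' y' →
        G.dist x' u' = G.dist x' u + 1 →
        G.dist y' u' = G.dist y' u + 1 →
        G.dist x' v + G.dist v u' = G.dist x' u + 1 := by
      intro x' y' hu2 hv2 hxu2 hyu2
      obtain ⟨⟨h1, h2, h3⟩, _⟩ := hmed x' u' v
      set z := m x' u' v with hz
      have t1 : G.dist x' y' ≤ G.dist x' z + G.dist z y' := hc.dist_triangle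
      have t2 : G.dist z y' ≤ G.dist z v + G.dist v y' := hc.dist_triangle
      have hzI : G.dist x' z + G.dist z y' = G.dist x' y' := by omega
      have czv : G.dist u' z = G.dist z u' := SimpleGraph.dist_comm
      rcases sign_lemma hm hadj z with hcase | hcase
      · -- dist u' z = dist u z + 1 : triangle violation
        have t3 : G.dist u v ≤ G.dist u z + G.dist z v := hc.dist_triangle
        omega
      · -- dist u z = dist u' z + 1
        rcases Nat.eq_zero_or_pos (G.dist z v) with hzv | hzv
        · have hev : z = v := hc.dist_eq_zero_iff.mp hzv
          rw [hev] at h1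
          omega
        · exact (ih (G.dist u' z) (by omega) x' y' u u' z hadj hu2 hzI hcase rfl hxu2 hyu2).elim
    have hx := key x y hu hv hxu' hyu'
    have cxy : G.dist y x = G.dist x y := SimpleGraph.dist_comm
    have cux : G.dist u x = G.dist x u := SimpleGraph.dist_comm
    have cvx : G.dist v x = G.dist x v := SimpleGraph.dist_comm
    have cuy : G.dist u y = G.dist y u := SimpleGraph.dist_comm
    have cvy : G.dist v y = G.dist y v := SimpleGraph.dist_comm
    have hy := key y x (by omega) (by omega) hyu' hxu'
    have cvu' : G.dist u' v = G.dist v u' := SimpleGraph.dist_comm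
    have hvu1 : G.dist v u' = 1 := by omega
    have huv2 : G.dist u v = 2 := by omega
    have hxv : G.dist x v = G.dist x u := by omega
    have hyv : G.dist y v = G.dist y u := by omega
    clear key ih hpos hx hy hn cxy cvu' hv huv
    -- c := m u v x , c' := m u v y
    obtain ⟨⟨a1, a2, a3⟩, -⟩ := hmed u v x
    set c := m u v x with hcdef
    have ca : G.dist v c = G.dist c v := SimpleGraph.dist_comm
    have hcu : G.dist u c = 1 := by omega
    have hcv : G.dist c v = 1 := by omega
    have hcx : G.dist c x + 1 = G.dist x u := by omega
    clear a1 a2 a3 ca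
    obtain ⟨⟨b1, b2, b3⟩, -⟩ := hmed u v y
    set c' := m u v y with hc'def
    have cb : G.dist v c' = G.dist c' v := SimpleGraph.dist_comm
    have hc'u : G.dist u c' = 1 := by omega
    have hc'v : G.dist c' v = 1 := by omega
    have hc'y : G.dist c' y + 1 = G.dist y u := by omega
    clear b1 b2 b3 cb cux cvx cuy cvy hxv hyv
    -- distinctness
    have hcc' : c ≠ c' := by
      intro he
      have t : G.dist x y ≤ G.dist x c + G.dist c y := hc.dist_triangle
      have d1 : G.dist x c = G.dist c x := SimpleGraph.dist_comm
      have d2 : G.dist c y = G.dist c' y := by rw [he]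
      rw [he] at t d1 hcx
      have cuy : G.dist u y = G.dist y u := SimpleGraph.dist_comm
      omega
    have hcu' : c ≠ u' := by
      intro he
      have d1 : G.dist u' x = G.dist x u' := SimpleGraph.dist_comm
      rw [he] at hcx
      omega
    have hc'u' : c' ≠ u' := by
      intro he
      have d1 : G.dist u' y = G.dist y u' := SimpleGraph.dist_comm
      rw [he] at hc'y
      omega
    clear hcx hc'y hu hxu' hyu'
    -- pairwise distance 2
    have two : ∀ p q : V, G.dist u p = 1 → G.dist u q = 1 → p ≠ q → G.dist p q = 2 := by
      intro p q hp hq hne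
      have t : G.dist p q ≤ G.dist p u + G.dist u q := hc.dist_triangle
      have cp : G.dist p u = G.dist u p := SimpleGraph.dist_comm
      have hne0 : G.dist p q ≠ 0 := fun h => hne (hc.dist_eq_zero_iff.mp h)
      have hne1 : G.dist p q ≠ 1 := by
        intro h
        have cq : G.dist q u = G.dist u q := SimpleGraph.dist_comm
        rcases sign_lemma hm (SimpleGraph.dist_eq_one_iff_adj.mp h) u with hh | hh <;> omega
      omega
    have huu'1 : G.dist u u' = 1 := SimpleGraph.dist_eq_one_iff_adj.mpr hadj
    have d1 : G.dist u' c = 2 := two u' c huu'1 hcu (Ne.symm hcu')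
    have d2 : G.dist u' c' = 2 := two u' c' huu'1 hc'u (Ne.symm hc'u')
    have d3 : G.dist c c' = 2 := two c c' hcu hc'u hcc'
    clear two hcc' hcu' hc'u'
    -- both u and v are medians of (u', c, c')
    obtain ⟨-, huniq⟩ := hmed u' c c'
    have e1 : G.dist u' u = 1 := by
      have h : G.dist u' u = G.dist u u' := SimpleGraph.dist_comm
      omega
    have e2 : G.dist u' v = 1 := by
      have h : G.dist u' v = G.dist v u' := SimpleGraph.dist_comm
      omega
    have e3 : G.dist c u = 1 := by
      have h : G.dist c u = G.dist u c := SimpleGraph.dist_comm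
      omega
    have e4 : G.dist v c' = 1 := by
      have h : G.dist v c' = G.dist c' v := SimpleGraph.dist_comm
      omega
    have e5 : G.dist c v = 1 := hcv
    have e6 : G.dist v c = 1 := by
      have h : G.dist v c = G.dist c v := SimpleGraph.dist_comm
      omega
    have hueq : u = m u' c c' := huniq u ⟨by omega, by omega, by omega⟩
    have hveq : v = m u' c c' := huniq v ⟨by omega, by omega, by omega⟩
    have heq : u = v := hueq.trans hveq.symm
    rw [heq] at huv2
    have hz : G.dist v v = 0 := SimpleGraph.dist_self
    omega

private lemma step_lemma (hc : G.Connected) {u w : V} (h : 0 < G.dist u w) :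
    ∃ u', G.Adj u u' ∧ G.dist u' w + 1 = G.dist u w := by
  obtain ⟨p, hp⟩ := hc.exists_walk_length_eq_dist u w
  cases p with
  | nil => simp at hp; have hz : G.dist u u = 0 := SimpleGraph.dist_self; omega
  | @cons _ u' _ hadj q =>
    refine ⟨u', hadj, ?_⟩
    have h1 : G.dist u' w ≤ q.length := SimpleGraph.dist_le q
    have h2 : G.dist u w ≤ G.dist u u' + G.dist u' w := hc.dist_triangle
    have h3 : G.dist u u' = 1 := SimpleGraph.dist_eq_one_iff_adj.mpr hadj
    simp [SimpleGraph.Walk.length_cons] at hp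
    omega

private lemma interval_convex (hm : IsMedianFn G m) (x y : V) :
    ∀ n (u v w : V), G.dist u v = n →
      G.dist x u + G.dist u y = G.dist x y →
      G.dist x v + G.dist v y = G.dist x y →
      G.dist u w + G.dist w v = G.dist u v →
      G.dist x w + G.dist w y = G.dist x y := by
  intro n
  induction n using Nat.strong_induction_on with
  | _ n ih =>
  intro u v w hn hu hv hw
  have hc := hm.1
  rcases Nat.eq_zero_or_pos (G.dist u w) with h0 | hpos
  · have he : u = w := hc.dist_eq_zero_iff.mp h0
    subst he
    exact hu
  · obtain ⟨u', hadj, hstep⟩ := step_lemma hc hpos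
    have tdu'v : G.dist u' v ≤ G.dist u' w + G.dist w v := hc.dist_triangle
    have tduv : G.dist u v ≤ G.dist u u' + G.dist u' v := hc.dist_triangle
    have hadj1 : G.dist u u' = 1 := SimpleGraph.dist_eq_one_iff_adj.mpr hadj
    have hu'v : G.dist u' v + 1 = G.dist u v := by omega
    have tx : G.dist x y ≤ G.dist x u' + G.dist u' y := hc.dist_triangle
    have cxu' : G.dist u' x = G.dist x u' := SimpleGraph.dist_comm
    have cxu : G.dist u x = G.dist x u := SimpleGraph.dist_comm
    have cyu' : G.dist y u' = G.dist u' y := SimpleGraph.dist_comm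
    have cyu : G.dist y u = G.dist u y := SimpleGraph.dist_comm
    rcases sign_lemma hm hadj x with hx | hx <;> rcases sign_lemma hm hadj y with hy | hy
    · exact (no_bad hm (G.dist u' v) x y u u' v hadj hu hv (by omega) rfl
        (by omega) (by omega)).elim
    all_goals
      have hu'I : G.dist x u' + G.dist u' y = G.dist x y := by omega
    all_goals
      exact ih (G.dist u' v) (by omega) u' v w rfl hu'I hv (by omega)

private lemma gate_lemma (hm : IsMedianFn G m) (x y a u : V)
    (hu : G.dist x u + G.dist u y = G.dist x y) :
    G.dist a (m x y a) + G.dist (m x y a) u = G.dist a u := by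
  have hc := hm.1
  obtain ⟨⟨p1, p2, p3⟩, huniq⟩ := hm.2 x y a
  obtain ⟨⟨w1, w2, w3⟩, -⟩ := hm.2 a (m x y a) u
  set p := m x y a with hp
  set w := m a p u with hwdef
  have hwI : G.dist x w + G.dist w y = G.dist x y :=
    interval_convex hm x y (G.dist p u) p u w rfl p1 hu w2
  have t1 : G.dist x a ≤ G.dist x w + G.dist w a := hc.dist_triangle
  have t2 : G.dist x w ≤ G.dist x p + G.dist p w := hc.dist_triangle
  have t3 : G.dist y a ≤ G.dist y w + G.dist w a := hc.dist_triangle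
  have t4 : G.dist y w ≤ G.dist y p + G.dist p w := hc.dist_triangle
  have c1 : G.dist p a = G.dist a p := SimpleGraph.dist_comm
  have c2 : G.dist w p = G.dist p w := SimpleGraph.dist_comm
  have c3 : G.dist w a = G.dist a w := SimpleGraph.dist_comm
  have hxw : G.dist x w + G.dist w a = G.dist x a := by omega
  have hyw : G.dist y w + G.dist w a = G.dist y a := by omega
  have hwp : w = p := huniq w ⟨hwI, hyw, hxw⟩
  rw [hwp] at w3
  exact w3

end Aux

/-- The median operation of a median graph is 1-Lipschitz in each variable. -/
theorem stmt3 {V : Type*} (G : SimpleGraph V) (m : V → V → V → V)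
    (hm : IsMedianFn G m) (x y a b : V) :
    G.dist (m x y a) (m x y b) ≤ G.dist a b := by
  have hc := hm.1
  obtain ⟨⟨p1, p2, p3⟩, -⟩ := hm.2 x y a
  obtain ⟨⟨q1, q2, q3⟩, -⟩ := hm.2 x y b
  have g1 := gate_lemma hm x y a (m x y b) q1
  have g2 := gate_lemma hm x y b (m x y a) p1
  have t1 : G.dist a (m x y b) ≤ G.dist a b + G.dist b (m x y b) := hc.dist_triangle
  have t2 : G.dist b (m x y a) ≤ G.dist b a + G.dist a (m x y a) := hc.dist_triangle
  have c1 : G.dist (m x y b) (m x y a) = G.dist (m x y a) (m x y b) := SimpleGraph.dist_comm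
  have c2 : G.dist a b = G.dist b a := SimpleGraph.dist_comm
  omega
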